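/- Let n ≥ 2, let P be the set of the 2^n − 1 non-zero vectors of 𝔽_2^n, and for 2 ≤ k ≤ 2^n − 1 let B be the family of all k-element subsets of P that are linearly dependent over 𝔽_2. Then (P, B) is a 2-design: there is a constant λ such that every pair of distinct non-zero vectors of 𝔽_2^n is contained in exactly λ members of B. -/

import Mathlib

open Classical in
/-- A bijection of finite types of equal cardinality can be chosen to map two
prescribed distinct points to two prescribed distinct points. -/
lemma exists_equiv_two {α β : Type*} [Fintype α] [Fintype β]
    (h : Fintype.card α = Fintype.card β) (a b : α) (hab : a ≠ b)
    (c d : β) (hcd : c ≠ d) : ∃ e : α ≃ β, e a = c ∧ e b = d := by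
  let g : α ≃ β := Fintype.equivOfCardEq h
  let g1 : α ≃ β := g.trans (Equiv.swap (g a) c)
  have hg1a : g1 a = c := by simp [g1]
  have hba : g1 b ≠ c := fun hbc => hab (g1.injective (hbc.trans hg1a.symm)).symm
  refine ⟨g1.trans (Equiv.swap (g1 b) d), ?_, ?_⟩
  · simp [hg1a, Equiv.swap_apply_of_ne_of_ne hba.symm hcd]
  · simp

lemma pair_indep {n : ℕ} (x y : Fin n → ZMod 2) (hx : x ≠ 0) (hy : y ≠ 0)
    (hxy : x ≠ y) : LinearIndependent (ZMod 2) ![x, y] := by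
  rw [LinearIndependent.pair_iff' hx]
  intro a
  fin_cases a
  · show ¬ (0 : ZMod 2) • x = y; simpa using hy.symm
  · show ¬ (1 : ZMod 2) • x = y; simpa using hxy

open Classical in
lemma exists_linEquiv {n : ℕ} (x y x' y' : Fin n → ZMod 2)
    (hx : x ≠ 0) (hy : y ≠ 0) (hxy : x ≠ y)
    (hx' : x' ≠ 0) (hy' : y' ≠ 0) (hxy' : x' ≠ y') :
    ∃ f : (Fin n → ZMod 2) ≃ₗ[ZMod 2] (Fin n → ZMod 2), f x = x' ∧ f y = y' := by
  have hs := (linearIndepOn_id_range_iff (pair_indep x y hx hy hxy).injective).mpr (pair_indep x y hx hy hxy)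
  have ht := (linearIndepOn_id_range_iff (pair_indep x' y' hx' hy' hxy').injective).mpr (pair_indep x' y' hx' hy' hxy')
  let b := Module.Basis.extend hs
  let b' := Module.Basis.extend ht
  have hcard : Fintype.card (hs.extend (Set.subset_univ _)) =
      Fintype.card (ht.extend (Set.subset_univ _)) := by
    rw [← Module.finrank_eq_card_basis b, ← Module.finrank_eq_card_basis b']
  have hxS : x ∈ hs.extend (Set.subset_univ _) :=
    hs.subset_extend _ ⟨0, by simp⟩
  have hyS : y ∈ hs.extend (Set.subset_univ _) :=
    hs.subset_extend _ ⟨1, by simp⟩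
  have hxT : x' ∈ ht.extend (Set.subset_univ _) :=
    ht.subset_extend _ ⟨0, by simp⟩
  have hyT : y' ∈ ht.extend (Set.subset_univ _) :=
    ht.subset_extend _ ⟨1, by simp⟩
  obtain ⟨e, he1, he2⟩ := exists_equiv_two hcard ⟨x, hxS⟩ ⟨y, hyS⟩
    (by simpa [Subtype.ext_iff] using hxy) ⟨x', hxT⟩ ⟨y', hyT⟩
    (by simpa [Subtype.ext_iff] using hxy')
  refine ⟨b.equiv b' e, ?_, ?_⟩
  · have h1 : (b.equiv b' e) (b ⟨x, hxS⟩) = b' (e ⟨x, hxS⟩) := b.equiv_apply _ b' e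
    rw [Module.Basis.extend_apply_self, he1] at h1
    rw [h1]
    exact Module.Basis.extend_apply_self ht _
  · have h1 : (b.equiv b' e) (b ⟨y, hyS⟩) = b' (e ⟨y, hyS⟩) := b.equiv_apply _ b' e
    rw [Module.Basis.extend_apply_self, he2] at h1
    rw [h1]
    exact Module.Basis.extend_apply_self ht _

lemma count_invariant {n k : ℕ} (f : (Fin n → ZMod 2) ≃ₗ[ZMod 2] (Fin n → ZMod 2))
    (x y : Fin n → ZMod 2) :
    (Finset.univ.filter (fun s : Finset (Fin n → ZMod 2) =>
        (∀ w ∈ s, w ≠ 0) ∧ s.card = k ∧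
        (∃ t ∈ s.powerset, t.Nonempty ∧ (∑ w ∈ t, w) = 0) ∧
        x ∈ s ∧ y ∈ s)).card =
    (Finset.univ.filter (fun s : Finset (Fin n → ZMod 2) =>
        (∀ w ∈ s, w ≠ 0) ∧ s.card = k ∧
        (∃ t ∈ s.powerset, t.Nonempty ∧ (∑ w ∈ t, w) = 0) ∧
        f x ∈ s ∧ f y ∈ s)).card := by
  classical
  have key : ∀ (g : (Fin n → ZMod 2) ≃ₗ[ZMod 2] (Fin n → ZMod 2))
      (u v : Fin n → ZMod 2) (s : Finset (Fin n → ZMod 2)),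
      ((∀ w ∈ s, w ≠ 0) ∧ s.card = k ∧
        (∃ t ∈ s.powerset, t.Nonempty ∧ (∑ w ∈ t, w) = 0) ∧
        u ∈ s ∧ v ∈ s) →
      ((∀ w ∈ s.image g, w ≠ 0) ∧ (s.image g).card = k ∧
        (∃ t ∈ (s.image g).powerset, t.Nonempty ∧ (∑ w ∈ t, w) = 0) ∧
        g u ∈ s.image g ∧ g v ∈ s.image g) := by
    intro g u v s ⟨h0, hc, ⟨t, hts, htne, hsum⟩, hu, hv⟩
    refine ⟨?_, ?_, ⟨t.image g, ?_, ?_, ?_⟩, ?_, ?_⟩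
    · rintro w hw
      obtain ⟨v', hv', rfl⟩ := Finset.mem_image.1 hw
      simpa using h0 v' hv'
    · rw [Finset.card_image_of_injective _ g.injective]; exact hc
    · rw [Finset.mem_powerset] at hts ⊢
      exact Finset.image_subset_image hts
    · exact htne.image g
    · rw [Finset.sum_image (fun a _ b _ h => g.injective h)]
      rw [← map_sum, hsum, map_zero]
    · exact Finset.mem_image_of_mem g hu
    · exact Finset.mem_image_of_mem g hv
  refine Finset.card_bij' (fun s _ => s.image f) (fun s _ => s.image f.symm)
    ?_ ?_ ?_ ?_
  · intro s hs
    rw [Finset.mem_filter] at hs ⊢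
    exact ⟨Finset.mem_univ _, key f x y s hs.2⟩
  · intro s hs
    rw [Finset.mem_filter] at hs ⊢
    have := key f.symm (f x) (f y) s hs.2
    simp only [LinearEquiv.symm_apply_apply] at this
    exact ⟨Finset.mem_univ _, this⟩
  · intro s _
    ext a
    simp
  · intro s _
    ext a
    simp

theorem stmt_18 (n : ℕ) (hn : 2 ≤ n) (k : ℕ) (hk2 : 2 ≤ k) (hk : k ≤ 2 ^ n - 1) :
    ∃ lam : ℕ, ∀ x y : Fin n → ZMod 2, x ≠ 0 → y ≠ 0 → x ≠ y →
      (Finset.univ.filter (fun s : Finset (Fin n → ZMod 2) =>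
        (∀ w ∈ s, w ≠ 0) ∧ s.card = k ∧
        (∃ t ∈ s.powerset, t.Nonempty ∧ (∑ w ∈ t, w) = 0) ∧
        x ∈ s ∧ y ∈ s)).card = lam := by
  classical
  have h0 : (⟨0, by omega⟩ : Fin n) ≠ ⟨1, by omega⟩ := by
    simp [Fin.ext_iff]
  set x₀ : Fin n → ZMod 2 := Pi.single ⟨0, by omega⟩ 1 with hx0def
  set y₀ : Fin n → ZMod 2 := Pi.single ⟨1, by omega⟩ 1 with hy0def
  have hx₀ : x₀ ≠ 0 := by
    intro h
    have := congrFun h ⟨0, by omega⟩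
    simp [hx0def] at this
  have hy₀ : y₀ ≠ 0 := by
    intro h
    have := congrFun h ⟨1, by omega⟩
    simp [hy0def] at this
  have hxy₀ : x₀ ≠ y₀ := by
    intro h
    have := congrFun h ⟨0, by omega⟩
    simp [hx0def, hy0def, Pi.single_eq_of_ne h0] at this
  refine ⟨(Finset.univ.filter (fun s : Finset (Fin n → ZMod 2) =>
        (∀ w ∈ s, w ≠ 0) ∧ s.card = k ∧
        (∃ t ∈ s.powerset, t.Nonempty ∧ (∑ w ∈ t, w) = 0) ∧
        x₀ ∈ s ∧ y₀ ∈ s)).card, ?_⟩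
  intro x y hx hy hxy
  obtain ⟨f, hf1, hf2⟩ := exists_linEquiv x y x₀ y₀ hx hy hxy hx₀ hy₀ hxy₀
  rw [count_invariant f x y, hf1, hf2]
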